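/- For every real a > 0, ∫₁^∞ (1/x) K₁( a (x²+1)/x ) dx = (π/(4a)) e^{−2a}. -/

import Mathlib

open MeasureTheory Real

/-- Modified Bessel function of the second kind, integral representation. -/
noncomputable def besselK (ν z : ℝ) : ℝ :=
  ∫ t in Set.Ioi (0:ℝ), Real.exp (-z * Real.cosh t) * Real.cosh (ν * t)

namespace BesselAux

lemma one_add_sq_half_le_cosh (t : ℝ) : 1 + t ^ 2 / 2 ≤ Real.cosh t := by
  have h1 : Real.cosh t = Real.cosh (t / 2) ^ 2 + Real.sinh (t / 2) ^ 2 := by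
    rw [← Real.cosh_two_mul]; congr 1; ring
  have habs : |Real.sinh (t / 2)| = Real.sinh |t / 2| := Real.abs_sinh (t / 2)
  have h3 : |t / 2| ≤ Real.sinh |t / 2| := Real.self_le_sinh_iff.mpr (abs_nonneg _)
  have h2 : (t / 2) ^ 2 ≤ Real.sinh (t / 2) ^ 2 := by
    calc (t / 2) ^ 2 = |t / 2| ^ 2 := (sq_abs _).symm
      _ ≤ Real.sinh |t / 2| ^ 2 := by nlinarith [abs_nonneg (t / 2)]
      _ = |Real.sinh (t / 2)| ^ 2 := by rw [habs]
      _ = Real.sinh (t / 2) ^ 2 := sq_abs _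
  nlinarith [Real.cosh_sq (t / 2)]

lemma integrable_master {b : ℝ} (hb : 0 < b) {φ : ℝ → ℝ} (hφ : Continuous φ)
    (hφle : ∀ t, |φ t| ≤ Real.cosh t) :
    Integrable (fun t : ℝ => Real.exp (-b * Real.cosh t) * φ t) := by
  have cont : Continuous fun t : ℝ => Real.exp (-b * Real.cosh t) * φ t := by fun_prop
  refine Integrable.mono'
    (g := fun t : ℝ => 2 / b * Real.exp (-(b / 2)) * Real.exp (-(b / 4) * t ^ 2))
    ((integrable_exp_neg_mul_sq (by positivity)).const_mul _)
    cont.aestronglyMeasurable (Filter.Eventually.of_forall fun t => ?_)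
  rw [Real.norm_eq_abs, abs_mul, abs_of_pos (Real.exp_pos _)]
  have h2 : Real.cosh t ≤ 2 / b * Real.exp (b / 2 * Real.cosh t) := by
    have hx := Real.add_one_le_exp (b / 2 * Real.cosh t)
    have h1c := Real.one_le_cosh t
    rw [div_mul_eq_mul_div, le_div_iff₀ hb]
    nlinarith [Real.exp_pos (b / 2 * Real.cosh t)]
  have h3 : Real.exp (-b * Real.cosh t) * |φ t| ≤ 2 / b * Real.exp (-(b / 2) * Real.cosh t) := by
    calc Real.exp (-b * Real.cosh t) * |φ t|
        ≤ Real.exp (-b * Real.cosh t) * (2 / b * Real.exp (b / 2 * Real.cosh t)) := by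
          have := (hφle t).trans h2
          exact mul_le_mul_of_nonneg_left this (Real.exp_pos _).le
      _ = 2 / b * (Real.exp (-b * Real.cosh t) * Real.exp (b / 2 * Real.cosh t)) := by ring
      _ = 2 / b * Real.exp (-(b / 2) * Real.cosh t) := by rw [← Real.exp_add]; ring_nf
  refine h3.trans ?_
  have h4 : Real.exp (-(b / 2) * Real.cosh t) ≤ Real.exp (-(b / 2)) * Real.exp (-(b / 4) * t ^ 2) := by
    rw [← Real.exp_add, Real.exp_le_exp]
    have := one_add_sq_half_le_cosh t
    nlinarith
  calc 2 / b * Real.exp (-(b / 2) * Real.cosh t)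
      ≤ 2 / b * (Real.exp (-(b / 2)) * Real.exp (-(b / 4) * t ^ 2)) := by
        exact mul_le_mul_of_nonneg_left h4 (by positivity)
    _ = 2 / b * Real.exp (-(b / 2)) * Real.exp (-(b / 4) * t ^ 2) := by ring

end BesselAux

namespace BesselAux

variable {a : ℝ}

lemma abs_half_le_abs (t : ℝ) : |t / 2| ≤ |t| := by
  rw [abs_div, abs_two]; linarith [abs_nonneg t]

lemma int_g0 (ha : 0 < a) : Integrable (fun t : ℝ => Real.exp (-a * Real.cosh t)) := by
  have h := integrable_master ha (continuous_const (y := (1:ℝ))) (fun t => by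
    rw [abs_one]; exact Real.one_le_cosh t)
  simpa [mul_one] using h

lemma int_g1 (ha : 0 < a) : Integrable (fun t : ℝ => Real.exp (-a * Real.cosh t) * Real.cosh t) :=
  integrable_master ha Real.continuous_cosh (fun t => by
    rw [abs_of_pos (Real.cosh_pos t)])

lemma int_gh (ha : 0 < a) :
    Integrable (fun t : ℝ => Real.exp (-a * Real.cosh t) * Real.cosh (t / 2)) :=
  integrable_master ha (by fun_prop) (fun t => by
    rw [abs_of_pos (Real.cosh_pos _), Real.cosh_le_cosh]
    exact (abs_abs (t/2) ▸ abs_half_le_abs t))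

lemma abs_sinh_le_cosh (x : ℝ) : |Real.sinh x| ≤ Real.cosh x := by
  rw [abs_le]
  constructor
  · have := Real.cosh_add_sinh x
    nlinarith [Real.exp_pos x]
  · have := Real.cosh_sub_sinh x
    nlinarith [Real.exp_pos (-x)]

lemma int_gs (ha : 0 < a) :
    Integrable (fun t : ℝ => Real.exp (-a * Real.cosh t) * Real.sinh (t / 2)) :=
  integrable_master ha (by fun_prop) (fun t => by
    refine (abs_sinh_le_cosh _).trans ?_
    rw [Real.cosh_le_cosh]
    exact (abs_abs (t/2) ▸ abs_half_le_abs t))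

end BesselAux

namespace BesselAux

lemma int_F {a : ℝ} (ha : 0 < a) :
    Integrable (fun p : ℝ × ℝ =>
      Real.exp (-(2 * a * Real.cosh p.1) * Real.cosh p.2) * Real.cosh p.2)
      (MeasureTheory.volume.prod MeasureTheory.volume) := by
  have hb := (int_g0 ha).mul_prod (int_g1 ha)
  have hcont : Continuous (fun p : ℝ × ℝ =>
      Real.exp (-(2 * a * Real.cosh p.1) * Real.cosh p.2) * Real.cosh p.2) := by fun_prop
  refine hb.mono' hcont.aestronglyMeasurable (Filter.Eventually.of_forall fun p => ?_)
  rw [Real.norm_eq_abs, abs_mul, abs_of_pos (Real.exp_pos _), abs_of_pos (Real.cosh_pos _)]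
  have hexp : Real.exp (-(2 * a * Real.cosh p.1) * Real.cosh p.2)
      ≤ Real.exp (-a * Real.cosh p.1) * Real.exp (-a * Real.cosh p.2) := by
    rw [← Real.exp_add, Real.exp_le_exp]
    nlinarith [ha, Real.one_le_cosh p.1, Real.one_le_cosh p.2,
      mul_nonneg (sub_nonneg.2 (Real.one_le_cosh p.1)) (sub_nonneg.2 (Real.one_le_cosh p.2)),
      mul_pos (Real.cosh_pos p.1) (Real.cosh_pos p.2)]
  calc Real.exp (-(2 * a * Real.cosh p.1) * Real.cosh p.2) * Real.cosh p.2
      ≤ (Real.exp (-a * Real.cosh p.1) * Real.exp (-a * Real.cosh p.2)) * Real.cosh p.2 :=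
        mul_le_mul_of_nonneg_right hexp (Real.cosh_pos _).le
    _ = Real.exp (-a * Real.cosh p.1) * (Real.exp (-a * Real.cosh p.2) * Real.cosh p.2) := by ring

lemma shear : MeasurePreserving (fun p : ℝ × ℝ => (p.1, p.2 - p.1))
    (MeasureTheory.volume.prod MeasureTheory.volume)
    (MeasureTheory.volume.prod MeasureTheory.volume) := by
  have h := MeasurePreserving.skew_product (f := @id ℝ) (g := fun x y : ℝ => y - x)
    (μb := (MeasureTheory.volume : Measure ℝ)) (μd := (MeasureTheory.volume : Measure ℝ))
    (MeasurePreserving.id MeasureTheory.volume)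
    (measurable_snd.sub measurable_fst)
    (Filter.Eventually.of_forall fun x => by
      simp_rw [sub_eq_add_neg]
      exact map_add_right_eq_self MeasureTheory.volume (-x))
  exact h

lemma int_G {a : ℝ} (ha : 0 < a) :
    Integrable (Function.uncurry fun u s : ℝ =>
      Real.exp (-(2 * a * Real.cosh u) * Real.cosh (s - u)) * Real.cosh (s - u))
      (MeasureTheory.volume.prod MeasureTheory.volume) := by
  have h := (shear.integrable_comp (int_F ha).aestronglyMeasurable).mpr (int_F ha)
  exact h

lemma int_odd_zero {a : ℝ} :
    (∫ t : ℝ, Real.exp (-a * Real.cosh t) * Real.sinh (t / 2)) = 0 := by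
  have h := integral_neg_eq_self
    (fun t : ℝ => Real.exp (-a * Real.cosh t) * Real.sinh (t / 2)) MeasureTheory.volume
  simp only [Real.cosh_neg, neg_div, Real.sinh_neg, mul_neg] at h
  rw [integral_neg] at h
  linarith

end BesselAux

set_option maxHeartbeats 1600000 in
open BesselAux in
theorem integral_inv_besselK_one (a : ℝ) (ha : 0 < a) :
    ∫ x in Set.Ioi (1:ℝ), (1 / x) * besselK 1 (a * (x ^ 2 + 1) / x)
      = (π / (4 * a)) * Real.exp (-2 * a) := by
  set C : ℝ := ∫ t : ℝ, Real.exp (-a * Real.cosh t) * Real.cosh (t / 2) with hCdef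
  -- besselK 1 z as half of a full-line integral
  have hbessel : ∀ z : ℝ, besselK 1 z
      = (1 / 2) * ∫ t : ℝ, Real.exp (-z * Real.cosh t) * Real.cosh t := by
    intro z
    have h := integral_comp_abs (f := fun t => Real.exp (-z * Real.cosh t) * Real.cosh t)
    simp only [Real.cosh_abs] at h
    rw [besselK]
    simp only [one_mul]
    linarith
  -- substitution x = exp u
  have sub1 : (∫ x in Set.Ioi (1:ℝ), (1 / x) * besselK 1 (a * (x ^ 2 + 1) / x))
      = ∫ u in Set.Ioi (0:ℝ), besselK 1 (2 * a * Real.cosh u) := by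
    have himg : Real.exp '' Set.Ioi 0 = Set.Ioi 1 := by
      ext x
      constructor
      · rintro ⟨u, hu, rfl⟩
        simpa using Real.exp_lt_exp.mpr (Set.mem_Ioi.mp hu)
      · intro hx
        exact ⟨Real.log x, Real.log_pos hx, Real.exp_log (by linarith [Set.mem_Ioi.mp hx])⟩
    rw [← himg, integral_image_eq_integral_abs_deriv_smul measurableSet_Ioi
      (fun x _ => (Real.hasDerivAt_exp x).hasDerivWithinAt) (Real.exp_injective.injOn)]
    refine setIntegral_congr_fun measurableSet_Ioi fun u _ => ?_
    rw [smul_eq_mul, abs_of_pos (Real.exp_pos u)]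
    have h2 : a * ((Real.exp u) ^ 2 + 1) / Real.exp u = 2 * a * Real.cosh u := by
      rw [Real.cosh_eq, Real.exp_neg]
      field_simp
    rw [h2]
    field_simp
  -- reduce to a full-plane iterated integral
  have h_Ioi : (∫ u in Set.Ioi (0:ℝ), besselK 1 (2 * a * Real.cosh u))
      = (1 / 4) * ∫ u : ℝ, ∫ t : ℝ,
          Real.exp (-(2 * a * Real.cosh u) * Real.cosh t) * Real.cosh t := by
    have heven := integral_comp_abs (f := fun u => ∫ t : ℝ,
      Real.exp (-(2 * a * Real.cosh u) * Real.cosh t) * Real.cosh t)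
    simp only [Real.cosh_abs] at heven
    calc (∫ u in Set.Ioi (0:ℝ), besselK 1 (2 * a * Real.cosh u))
        = ∫ u in Set.Ioi (0:ℝ), (1 / 2) * ∫ t : ℝ,
            Real.exp (-(2 * a * Real.cosh u) * Real.cosh t) * Real.cosh t :=
          setIntegral_congr_fun measurableSet_Ioi fun u _ => hbessel _
      _ = (1 / 2) * ∫ u in Set.Ioi (0:ℝ), ∫ t : ℝ,
            Real.exp (-(2 * a * Real.cosh u) * Real.cosh t) * Real.cosh t :=
          integral_const_mul _ _
      _ = (1 / 4) * ∫ u : ℝ, ∫ t : ℝ,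
            Real.exp (-(2 * a * Real.cosh u) * Real.cosh t) * Real.cosh t := by
          rw [heven]; ring
  -- the key double-integral computation
  have key : (∫ u : ℝ, ∫ t : ℝ,
      Real.exp (-(2 * a * Real.cosh u) * Real.cosh t) * Real.cosh t) = (1 / 2) * C ^ 2 := by
    have step1 : ∀ u : ℝ, (∫ t : ℝ,
        Real.exp (-(2 * a * Real.cosh u) * Real.cosh t) * Real.cosh t)
        = ∫ s : ℝ, Real.exp (-(2 * a * Real.cosh u) * Real.cosh (s - u)) * Real.cosh (s - u) :=
      fun u => (integral_sub_right_eq_self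
        (fun t => Real.exp (-(2 * a * Real.cosh u) * Real.cosh t) * Real.cosh t) u).symm
    simp_rw [step1]
    rw [integral_integral_swap (int_G ha)]
    have inner : ∀ s : ℝ, (∫ u : ℝ,
        Real.exp (-(2 * a * Real.cosh u) * Real.cosh (s - u)) * Real.cosh (s - u))
        = Real.exp (-a * Real.cosh s) * ((1 / 2) * (Real.cosh (s / 2) * C)) := by
      intro s
      set ρ : ℝ → ℝ := fun q => Real.exp (-a * Real.cosh q) * Real.cosh ((s + q) / 2) with hρ
      have hpt : ∀ u : ℝ,
          Real.exp (-(2 * a * Real.cosh u) * Real.cosh (s - u)) * Real.cosh (s - u)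
          = Real.exp (-a * Real.cosh s) * ρ (s - 2 * u) := by
        intro u
        have e1 := Real.cosh_add u (s - u)
        have e2 := Real.cosh_sub (s - u) u
        rw [show u + (s - u) = s by ring] at e1
        rw [show s - u - u = s - 2 * u by ring] at e2
        have hcc : -(2 * a * Real.cosh u) * Real.cosh (s - u)
            = -a * Real.cosh s + -a * Real.cosh (s - 2 * u) := by
          rw [e1, e2]; ring
        rw [hρ]
        simp only []
        rw [show (s + (s - 2 * u)) / 2 = s - u by ring, hcc, Real.exp_add]
        ring
      simp_rw [hpt]
      rw [integral_const_mul]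
      congr 1
      -- ∫ u, ρ (s - 2u) du = (1/2) * (cosh(s/2) * C)
      have hmul := MeasureTheory.Measure.integral_comp_mul_left (fun v => ρ (s - v)) 2
      have hms : (∫ u : ℝ, ρ (s - 2 * u)) = |(2:ℝ)⁻¹| • ∫ v : ℝ, ρ (s - v) := hmul
      have hneg : (∫ v : ℝ, ρ (s - v)) = ∫ v : ℝ, ρ (s + v) := by
        have h := integral_neg_eq_self (fun v : ℝ => ρ (s + v)) MeasureTheory.volume
        simp only [← sub_eq_add_neg] at h
        exact h
      have hadd : (∫ v : ℝ, ρ (s + v)) = ∫ q : ℝ, ρ q :=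
        integral_add_left_eq_self ρ s
      have hval : (∫ q : ℝ, ρ q) = Real.cosh (s / 2) * C := by
        have hsplit : ∀ q : ℝ, ρ q
            = Real.cosh (s / 2) * (Real.exp (-a * Real.cosh q) * Real.cosh (q / 2))
              + Real.sinh (s / 2) * (Real.exp (-a * Real.cosh q) * Real.sinh (q / 2)) := by
          intro q
          rw [hρ]
          simp only []
          rw [show (s + q) / 2 = s / 2 + q / 2 by ring, Real.cosh_add]
          ring
        simp_rw [hsplit]
        rw [integral_add ((int_gh ha).const_mul _) ((int_gs ha).const_mul _),
          integral_const_mul, integral_const_mul, int_odd_zero, ← hCdef]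
        ring
      rw [hms, hneg, hadd, hval, smul_eq_mul]
      norm_num
    simp_rw [inner]
    have hre : ∀ s : ℝ, Real.exp (-a * Real.cosh s) * ((1 / 2) * (Real.cosh (s / 2) * C))
        = ((1 / 2) * C) * (Real.exp (-a * Real.cosh s) * Real.cosh (s / 2)) := fun s => by ring
    simp_rw [hre]
    rw [integral_const_mul, ← hCdef]
    ring
  -- value of C
  have hC : C = 2 * Real.exp (-a) * Real.sqrt (π / (2 * a)) := by
    have hderiv : ∀ x ∈ Set.univ, HasDerivWithinAt (fun t : ℝ => Real.sinh (t / 2))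
        (Real.cosh (x / 2) * (1 / 2)) Set.univ x := by
      intro x _
      have h1 : HasDerivAt (fun t : ℝ => t / 2) (1 / 2) x := (hasDerivAt_id x).div_const 2
      exact ((Real.hasDerivAt_sinh (x / 2)).comp x h1).hasDerivWithinAt
    have hinj : Set.InjOn (fun t : ℝ => Real.sinh (t / 2)) Set.univ := by
      intro x _ y _ h
      have := Real.sinh_injective h
      linarith
    have himg : (fun t : ℝ => Real.sinh (t / 2)) '' Set.univ = Set.univ := by
      rw [Set.image_univ, Set.range_eq_univ]
      intro y
      obtain ⟨x, hx⟩ := Real.sinh_surjective y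
      refine ⟨2 * x, ?_⟩
      show Real.sinh (2 * x / 2) = y
      rw [show (2:ℝ) * x / 2 = x by ring, hx]
    have hchg := integral_image_eq_integral_abs_deriv_smul MeasurableSet.univ hderiv hinj
      (fun x => 2 * Real.exp (-a) * Real.exp (-(2 * a) * x ^ 2))
    rw [himg] at hchg
    simp only [Measure.restrict_univ] at hchg
    have hpt : ∀ t : ℝ, |Real.cosh (t / 2) * (1 / 2)| •
        (2 * Real.exp (-a) * Real.exp (-(2 * a) * Real.sinh (t / 2) ^ 2))
        = Real.exp (-a * Real.cosh t) * Real.cosh (t / 2) := by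
      intro t
      rw [smul_eq_mul, abs_of_pos (mul_pos (Real.cosh_pos _) (by norm_num))]
      have hcosh : Real.cosh t = 2 * Real.sinh (t / 2) ^ 2 + 1 := by
        have h := Real.cosh_two_mul (t / 2)
        rw [show 2 * (t / 2) = t by ring] at h
        have h2 := Real.cosh_sq (t / 2)
        linarith
      have hee : Real.exp (-a) * Real.exp (-(2 * a) * Real.sinh (t / 2) ^ 2)
          = Real.exp (-a * Real.cosh t) := by
        rw [← Real.exp_add, hcosh]
        congr 1
        ring
      calc Real.cosh (t / 2) * (1 / 2) *
            (2 * Real.exp (-a) * Real.exp (-(2 * a) * Real.sinh (t / 2) ^ 2))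
          = Real.cosh (t / 2) * (Real.exp (-a) * Real.exp (-(2 * a) * Real.sinh (t / 2) ^ 2)) := by
            ring
        _ = Real.exp (-a * Real.cosh t) * Real.cosh (t / 2) := by rw [hee]; ring
    simp_rw [hpt] at hchg
    rw [hCdef, ← hchg, integral_const_mul, integral_gaussian]
  -- put everything together
  rw [sub1, h_Ioi, key, hC]
  have h1 : Real.sqrt (π / (2 * a)) ^ 2 = π / (2 * a) :=
    Real.sq_sqrt (by positivity)
  have h2 : Real.exp (-a) ^ 2 = Real.exp (-2 * a) := by
    rw [sq, ← Real.exp_add]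
    congr 1
    ring
  rw [mul_pow, mul_pow, h1, h2]
  field_simp
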